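/- If x is a fixed point of the PD3O iteration, i.e., there exist (p, q, x̄) with q = prox_{σf*}(q + σKx̄), p = prox_{τg}(p - τ∇h(p) - τKᵀq), and x̄ = 2p - p + τ∇h(p) - τ∇h(p) = p, then p satisfies the optimality condition 0 ∈ Kᵀ∂f(Kp) + ∂g(p) + ∇h(p), hence p minimizes f(Kx) + g(x) + h(x). -/

import Mathlib

open scoped RealInnerProductSpace
open Filter Topology

lemma convex_grad_subgrad {E : Type*} [NormedAddCommGroup E] [InnerProductSpace ℝ E]
    [CompleteSpace E] {h : E → ℝ} (hh : ConvexOn ℝ Set.univ h) {u p : E}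
    (hg : HasGradientAt h u p) : ∀ y, h p + ⟪u, y - p⟫ ≤ h y := by
  intro y
  set v := y - p with hv
  have hline : HasDerivAt (fun t : ℝ => h (p + t • v)) ⟪u, v⟫ 0 := by
    have h1 : HasDerivAt (fun t : ℝ => p + t • v) v 0 :=
      by simpa using ((hasDerivAt_id (0:ℝ)).smul_const v).const_add p
    have h2 := ((by simpa using hg.hasFDerivAt : HasFDerivAt h ((InnerProductSpace.toDual ℝ E) u) (p + (0:ℝ) • v)).comp_hasDerivAt 0 h1)
    simp [InnerProductSpace.toDual] at h2; exact h2
  have hslope : Tendsto (slope (fun t : ℝ => h (p + t • v)) 0) (𝓝[>] 0) (𝓝 ⟪u, v⟫) :=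
    ((hasDerivAt_iff_tendsto_slope.mp hline).mono_left
      (nhdsWithin_mono 0 (fun t ht => ne_of_gt ht)))
  have hle : ⟪u, v⟫ ≤ h y - h p := by
    refine le_of_tendsto hslope ?_
    filter_upwards [Ioc_mem_nhdsGT_of_mem (by norm_num : (0:ℝ) ∈ Set.Ico 0 1)] with t ht
    have ht0 : 0 < t := ht.1
    have ht1 : t ≤ 1 := ht.2
    have hc := hh.2 (Set.mem_univ p) (Set.mem_univ y) (by linarith : (0:ℝ) ≤ 1 - t)
      (le_of_lt ht0) (by ring)
    have : h (p + t • v) ≤ (1 - t) * h p + t * h y := by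
      have : (1 - t) • p + t • y = p + t • v := by
        simp [hv, smul_sub, sub_smul]; abel
      simpa [this] using hc
    simp only [slope_def_field, slope, zero_smul, add_zero, sub_zero, vsub_eq_sub] at this ⊢
    rw [smul_eq_mul, inv_mul_le_iff₀ ht0]
    nlinarith
  linarith


/-- `u` is a subgradient of the convex function `f` at `x`. -/
def IsSubgradientAt {E : Type*} [NormedAddCommGroup E] [InnerProductSpace ℝ E]
    (f : E → ℝ) (u x : E) : Prop :=
  ∀ y, f x + ⟪u, y - x⟫ ≤ f y

/-- Fixed points of PD3O are minimizers. If `(p, q, x̄)` is a fixed point of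
the PD3O iteration — via the prox characterizations this means `x̄ = p`,
`q ∈ ∂f(Kp)` (from `q = prox_{σf*}(q + σKx̄)`) and
`-(∇h(p) + Kᵀq) ∈ ∂g(p)` (from `p = prox_{τg}(p - τ∇h(p) - τKᵀq)`), so that
`0 ∈ Kᵀ∂f(Kp) + ∂g(p) + ∇h(p)` — then `p` minimizes `f(Kx) + g(x) + h(x)`. -/
theorem pd3o_fixed_point_is_minimizer (n m : ℕ)
    (K : EuclideanSpace ℝ (Fin n) →L[ℝ] EuclideanSpace ℝ (Fin m))
    (f : EuclideanSpace ℝ (Fin m) → ℝ) (g h : EuclideanSpace ℝ (Fin n) → ℝ)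
    (hf : ConvexOn ℝ Set.univ f) (hg : ConvexOn ℝ Set.univ g) (hh : ConvexOn ℝ Set.univ h)
    (h' : EuclideanSpace ℝ (Fin n) → EuclideanSpace ℝ (Fin n))
    (hgrad : ∀ x, HasGradientAt h (h' x) x)
    (τ σ : ℝ) (hτ : 0 < τ) (hσ : 0 < σ)
    (p : EuclideanSpace ℝ (Fin n)) (q : EuclideanSpace ℝ (Fin m))
    (hq : IsSubgradientAt f q (K p))
    (hp : IsSubgradientAt g (-(h' p + (ContinuousLinearMap.adjoint K) q)) p) :
    ∀ x, f (K p) + g p + h p ≤ f (K x) + g x + h x := by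
  intro x
  have h1 := hq (K x)
  have h2 := hp x
  have h3 := convex_grad_subgrad hh (hgrad p) x
  have hadj : ⟪(ContinuousLinearMap.adjoint K) q, x - p⟫ = ⟪q, K x - K p⟫ := by
    rw [ContinuousLinearMap.adjoint_inner_left, map_sub]
  rw [inner_neg_left, inner_add_left, hadj] at h2
  rw [← map_sub] at h1
  have : ⟪q, K x - K p⟫ = ⟪q, K (x - p)⟫ := by rw [map_sub]
  linarith [h1, h2, h3, this ▸ h1]
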